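/- Let 0 < α < 1 and let 0 = t_0 < t_1 < ⋯ < t_n be strictly increasing real mesh nodes. For 1 ≤ j ≤ m ≤ n define d_{m,j} := ((t_m − t_{m−j})^{1−α} − (t_m − t_{m−j+1})^{1−α})/(t_{m−j+1} − t_{m−j}). Then for every m with 1 ≤ m ≤ n and every j with 1 ≤ j ≤ m − 1, one has 0 < d_{m,j+1} < d_{m,j}. -/

import Mathlib

/-- The L1 coefficients `d_{m,j}` built from a mesh `t` and fractional order `α`. -/
noncomputable def l1Coeff (α : ℝ) (t : ℕ → ℝ) (m j : ℕ) : ℝ :=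
  ((t m - t (m - j)) ^ (1 - α) - (t m - t (m - j + 1)) ^ (1 - α)) /
    (t (m - j + 1) - t (m - j))

/-- For `0 < α < 1` and a strictly increasing mesh `0 = t₀ < t₁ < ⋯ < tₙ`,
the L1 coefficients satisfy `0 < d_{m,j+1} < d_{m,j}` for `1 ≤ m ≤ n`, `1 ≤ j ≤ m − 1`. -/
theorem stmt3 (α : ℝ) (hα0 : 0 < α) (hα1 : α < 1) (n : ℕ) (t : ℕ → ℝ)
    (ht0 : t 0 = 0) (hmono : ∀ i, i < n → t i < t (i + 1)) :
    ∀ m, 1 ≤ m → m ≤ n → ∀ j, 1 ≤ j → j ≤ m - 1 →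
      0 < l1Coeff α t m (j + 1) ∧ l1Coeff α t m (j + 1) < l1Coeff α t m j := by
  have key : ∀ k, k ≤ n → ∀ i, i < k → t i < t k := by
    intro k
    induction k with
    | zero => intro _ i hi; omega
    | succ k ih =>
      intro hk i hi
      have hstep := hmono k (by omega)
      rcases Nat.lt_succ_iff_lt_or_eq.mp hi with h | h
      · exact lt_trans (ih (by omega) i h) hstep
      · subst h; exact hstep
  intro m hm1 hmn j hj1 hjm
  have hjm' : j + 1 ≤ m := by omega
  set p := 1 - α with hp
  have hp0 : 0 < p := by simp [hp]; linarith
  have hp1 : p < 1 := by simp [hp]; linarith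
  set a := t (m - (j + 1)) with ha
  set b := t (m - j) with hb
  set c := t (m - j + 1) with hc
  have hab : a < b := by
    rw [ha, hb]
    exact key (m - j) (by omega) (m - (j + 1)) (by omega)
  have hbc : b < c := by
    rw [hb, hc]
    exact key (m - j + 1) (by omega) (m - j) (by omega)
  have hcm : c ≤ t m := by
    rcases eq_or_lt_of_le (show m - j + 1 ≤ m by omega) with h | h
    · rw [hc, h]
    · exact le_of_lt (key m hmn (m - j + 1) h)
  set x := t m - a with hx
  set y := t m - b with hy
  set z := t m - c with hz
  have hz0 : 0 ≤ z := by rw [hz]; linarith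
  have hy0 : 0 ≤ y := by linarith
  have hx0 : 0 ≤ x := by linarith
  have hzy : z < y := by rw [hz, hy]; linarith
  have hyx : y < x := by rw [hy, hx]; linarith
  have e1 : m - (j + 1) + 1 = m - j := by omega
  have hconc := Real.strictConcaveOn_rpow hp0 hp1
  have hd1 : l1Coeff α t m (j + 1) = (x ^ p - y ^ p) / (x - y) := by
    rw [l1Coeff, e1, ← ha, ← hb, ← hp, ← hx, ← hy]
    congr 1
    ring
  have hd2 : l1Coeff α t m j = (y ^ p - z ^ p) / (y - z) := by
    rw [l1Coeff, ← hb, ← hc, ← hp, ← hy, ← hz]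
    congr 1
    ring
  constructor
  · rw [hd1]
    apply div_pos
    · have := Real.rpow_lt_rpow hy0 hyx hp0
      linarith
    · linarith
  · rw [hd1, hd2]
    have := hconc.secant_strict_mono (a := y) (x := z) (y := x)
      hy0 hz0 hx0 (by linarith) (by linarith) (by linarith)
    have heq : (z ^ p - y ^ p) / (z - y) = (y ^ p - z ^ p) / (y - z) := by
      rw [show z - y = -(y - z) by ring, show z ^ p - y ^ p = -(y ^ p - z ^ p) by ring,
        neg_div_neg_eq]
    linarith [this, heq ▸ this]
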